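/- Let X be a Hausdorff topological space, Ψ : X → ℝⁿ a continuous map, w₀ ∈ ℝⁿ, and {U_i}_{i=1}^N a finite collection of open subsets of X whose union contains Ψ⁻¹(w₀), such that for each i the restriction Ψ|_{U_i} : U_i → Ψ(U_i) is an open map onto its image. Let [x] be a connected component of Ψ⁻¹(w₀). Then there exists ε > 0 such that for all indices k, l with U_k ∩ [x] ≠ ∅ and U_l ∩ [x] ≠ ∅, one has Ψ(U_k) ∩ B(w₀,ε) = Ψ(U_l) ∩ B(w₀,ε). -/

import Mathlib

open Set Metric

/-- A path `c : ℝ → ℝⁿ`, considered on `[0,1]`, is *monotone straight* if either it is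
constant, or its image is the segment `[c 0, c 1]` and it parametrizes this segment
weakly monotonically. -/
def MonotoneStraight {n : ℕ} (c : ℝ → EuclideanSpace ℝ (Fin n)) : Prop :=
  (∀ t ∈ Set.Icc (0:ℝ) 1, c t = c 0) ∨
  ((c '' Set.Icc (0:ℝ) 1 = segment ℝ (c 0) (c 1)) ∧
   ∀ t₁ t₂ t₃ : ℝ, 0 ≤ t₁ → t₁ < t₂ → t₂ < t₃ → t₃ ≤ 1 →
     c t₂ ∈ segment ℝ (c t₁) (c t₃))

/-- The restriction of `Ψ` to `U` is a *convex map*: any two points of `U` are joined by a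
continuous path in `U` whose composition with `Ψ` is monotone straight. -/
def IsConvexMapOn {n : ℕ} {X : Type*} [TopologicalSpace X]
    (Ψ : X → EuclideanSpace ℝ (Fin n)) (U : Set X) : Prop :=
  ∀ x₀ ∈ U, ∀ x₁ ∈ U, ∃ γ : ℝ → X,
    ContinuousOn γ (Set.Icc 0 1) ∧ (∀ t ∈ Set.Icc (0:ℝ) 1, γ t ∈ U) ∧
    γ 0 = x₀ ∧ γ 1 = x₁ ∧ MonotoneStraight (Ψ ∘ γ)

/-- The restriction `Ψ|_U : U → Ψ(U)` is an open map onto its image: the image of every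
relatively open subset of `U` is relatively open in `Ψ(U)`. -/
def IsOpenOnto {n : ℕ} {X : Type*} [TopologicalSpace X]
    (Ψ : X → EuclideanSpace ℝ (Fin n)) (U : Set X) : Prop :=
  ∀ O : Set X, IsOpen O → ∃ V : Set (EuclideanSpace ℝ (Fin n)),
    IsOpen V ∧ Ψ '' (O ∩ U) = V ∩ Ψ '' U

/-- The `Ψ`-distance: the infimum of the lengths (total variations) of `Ψ ∘ γ` over all
continuous paths `γ` in `X` from `x₀` to `x₁`; takes values in `[0,∞]`. -/
noncomputable def psiDist {n : ℕ} {X : Type*} [TopologicalSpace X]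
    (Ψ : X → EuclideanSpace ℝ (Fin n)) (x₀ x₁ : X) : ENNReal :=
  ⨅ γ ∈ {γ : ℝ → X | ContinuousOn γ (Set.Icc 0 1) ∧ γ 0 = x₀ ∧ γ 1 = x₁},
    eVariationOn (Ψ ∘ γ) (Set.Icc 0 1)

/-- For a finite open cover of a level set, with each restriction open onto its image:
near the level, the images of any two cover members meeting the component agree. -/
theorem exists_eps_images_eq {n : ℕ} {X : Type*} [TopologicalSpace X] [T2Space X]
    {N : ℕ}
    (Ψ : X → EuclideanSpace ℝ (Fin n)) (hcont : Continuous Ψ)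
    (w₀ : EuclideanSpace ℝ (Fin n))
    (U : Fin N → Set X) (hUopen : ∀ i, IsOpen (U i)) (hcover : Ψ ⁻¹' {w₀} ⊆ ⋃ i, U i)
    (hUopenOnto : ∀ i, IsOpenOnto Ψ (U i))
    (x : X) (hx : x ∈ Ψ ⁻¹' {w₀}) :
    ∃ ε > (0:ℝ), ∀ k l : Fin N,
      (U k ∩ connectedComponentIn (Ψ ⁻¹' {w₀}) x).Nonempty →
      (U l ∩ connectedComponentIn (Ψ ⁻¹' {w₀}) x).Nonempty →
      Ψ '' U k ∩ Metric.ball w₀ ε = Ψ '' U l ∩ Metric.ball w₀ ε := by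
  classical
  set C := connectedComponentIn (Ψ ⁻¹' {w₀}) x with hCdef
  have hCsub : C ⊆ Ψ ⁻¹' {w₀} := connectedComponentIn_subset _ _
  -- Step lemma for adjacent cover members
  have step : ∀ k l : Fin N, ((U k ∩ U l) ∩ C).Nonempty →
      ∃ ε > (0:ℝ), Ψ '' U k ∩ Metric.ball w₀ ε = Ψ '' U l ∩ Metric.ball w₀ ε := by
    intro k l ⟨y, ⟨hyk, hyl⟩, hyC⟩
    have hyw : Ψ y = w₀ := hCsub hyC
    obtain ⟨V, hVopen, hV⟩ := hUopenOnto k (U l) (hUopen l)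
    obtain ⟨W, hWopen, hW⟩ := hUopenOnto l (U k) (hUopen k)
    have hwV : w₀ ∈ V := by
      have h1 : Ψ y ∈ Ψ '' (U l ∩ U k) := ⟨y, ⟨hyl, hyk⟩, rfl⟩
      rw [hV, hyw] at h1; exact h1.1
    have hwW : w₀ ∈ W := by
      have h1 : Ψ y ∈ Ψ '' (U k ∩ U l) := ⟨y, ⟨hyk, hyl⟩, rfl⟩
      rw [hW, hyw] at h1; exact h1.1
    obtain ⟨ε₁, hε₁, hb₁⟩ := Metric.isOpen_iff.mp hVopen w₀ hwV
    obtain ⟨ε₂, hε₂, hb₂⟩ := Metric.isOpen_iff.mp hWopen w₀ hwW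
    refine ⟨min ε₁ ε₂, lt_min hε₁ hε₂, ?_⟩
    ext w
    constructor
    · rintro ⟨hwU, hwb⟩
      have h1 : w ∈ V ∩ Ψ '' U k :=
        ⟨hb₁ (Metric.ball_subset_ball (min_le_left _ _) hwb), hwU⟩
      rw [← hV] at h1
      exact ⟨image_mono (f := Ψ) inter_subset_left h1, hwb⟩
    · rintro ⟨hwU, hwb⟩
      have h1 : w ∈ W ∩ Ψ '' U l :=
        ⟨hb₂ (Metric.ball_subset_ball (min_le_right _ _) hwb), hwU⟩
      rw [← hW] at h1
      exact ⟨image_mono (f := Ψ) inter_subset_left h1, hwb⟩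
  -- choose an ε for each pair
  have hsel : ∀ p : Fin N × Fin N, ∃ ε > (0:ℝ), ((U p.1 ∩ U p.2) ∩ C).Nonempty →
      Ψ '' U p.1 ∩ Metric.ball w₀ ε = Ψ '' U p.2 ∩ Metric.ball w₀ ε := by
    intro p
    by_cases h : ((U p.1 ∩ U p.2) ∩ C).Nonempty
    · obtain ⟨ε, hε, heq⟩ := step p.1 p.2 h
      exact ⟨ε, hε, fun _ => heq⟩
    · exact ⟨1, one_pos, fun h' => absurd h' h⟩
  choose e he hpe using hsel
  rcases Nat.eq_zero_or_pos N with hN | hN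
  · subst hN
    exact ⟨1, one_pos, fun k => k.elim0⟩
  have huniv : (Finset.univ : Finset (Fin N × Fin N)).Nonempty := by
    have : Nonempty (Fin N) := ⟨⟨0, hN⟩⟩
    exact Finset.univ_nonempty
  set ε₀ := Finset.univ.inf' huniv e with hε₀def
  have hε₀pos : 0 < ε₀ := by
    rw [hε₀def, Finset.lt_inf'_iff]
    exact fun p _ => he p
  have hε₀le : ∀ p : Fin N × Fin N, ε₀ ≤ e p :=
    fun p => Finset.inf'_le _ (Finset.mem_univ p)
  -- shrinking the ball preserves equalities
  have shrink : ∀ (A B : Set (EuclideanSpace ℝ (Fin n))) (r s : ℝ), s ≤ r →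
      A ∩ Metric.ball w₀ r = B ∩ Metric.ball w₀ r →
      A ∩ Metric.ball w₀ s = B ∩ Metric.ball w₀ s := by
    intro A B r s hsr hAB
    have hb : Metric.ball w₀ s ∩ Metric.ball w₀ r = Metric.ball w₀ s :=
      inter_eq_left.mpr (Metric.ball_subset_ball hsr)
    calc A ∩ Metric.ball w₀ s = (A ∩ Metric.ball w₀ r) ∩ Metric.ball w₀ s := by
          rw [inter_assoc, inter_comm (Metric.ball w₀ r), hb]
      _ = (B ∩ Metric.ball w₀ r) ∩ Metric.ball w₀ s := by rw [hAB]
      _ = B ∩ Metric.ball w₀ s := by rw [inter_assoc, inter_comm (Metric.ball w₀ r), hb]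
  -- adjacency relation and reachability
  set Adj : Fin N → Fin N → Prop := fun k l => ((U k ∩ U l) ∩ C).Nonempty with hAdjdef
  have reach : ∀ k l : Fin N, (U k ∩ C).Nonempty → (U l ∩ C).Nonempty →
      Relation.ReflTransGen Adj k l := by
    intro k l hk hl
    by_contra hnr
    have hpc : IsPreconnected C := isPreconnected_connectedComponentIn
    set A := ⋃ i ∈ {i : Fin N | Relation.ReflTransGen Adj k i}, U i with hAdef
    set B := ⋃ i ∈ {i : Fin N | ¬ Relation.ReflTransGen Adj k i}, U i with hBdef
    have hAopen : IsOpen A := isOpen_biUnion fun i _ => hUopen i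
    have hBopen : IsOpen B := isOpen_biUnion fun i _ => hUopen i
    have hCAB : C ⊆ A ∪ B := by
      intro z hz
      obtain ⟨i, hi⟩ := mem_iUnion.mp (hcover (hCsub hz))
      by_cases hri : Relation.ReflTransGen Adj k i
      · exact Or.inl (mem_biUnion hri hi)
      · exact Or.inr (mem_biUnion hri hi)
    have hCA : (C ∩ A).Nonempty := by
      obtain ⟨z, hzU, hzC⟩ := hk
      exact ⟨z, hzC, mem_biUnion (Relation.ReflTransGen.refl) hzU⟩
    have hCB : (C ∩ B).Nonempty := by
      obtain ⟨z, hzU, hzC⟩ := hl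
      exact ⟨z, hzC, mem_biUnion hnr hzU⟩
    obtain ⟨z, hzC, hzA, hzB⟩ := hpc A B hAopen hBopen hCAB hCA hCB
    obtain ⟨i, hri, hzi⟩ := by
      rw [hAdef] at hzA; simpa using hzA
    obtain ⟨j, hrj, hzj⟩ := by
      rw [hBdef] at hzB; simpa using hzB
    exact hrj (hri.tail ⟨z, ⟨hzi, hzj⟩, hzC⟩)
  have chain : ∀ {k l : Fin N}, Relation.ReflTransGen Adj k l →
      Ψ '' U k ∩ Metric.ball w₀ ε₀ = Ψ '' U l ∩ Metric.ball w₀ ε₀ := by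
    intro k l hr
    induction hr with
    | refl => rfl
    | @tail b c _ hadj ih =>
        exact ih.trans (shrink _ _ _ _ (hε₀le (b, c)) (hpe (b, c) hadj))
  exact ⟨ε₀, hε₀pos, fun k l hk hl => chain (reach k l hk hl)⟩
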